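/- Partition {1,…,d} into disjoint blocks G₁,…,G_G. Let z ~ N(0, I_d) and independent block masks m_i^blk ~ Bernoulli(π_i^blk), and define v on block G_i as m_i^blk · z_{G_i}. Fix g ∈ ℝ^d and Δ = ⟨g, v⟩. Then the block estimator g̃_{G_i} = (Δ/π_i^blk) m_i^blk z_{G_i} satisfies E[g̃_{G_i}] = g_{G_i} for every block i with π_i^blk > 0. -/

import Mathlib

open MeasureTheory ProbabilityTheory Finset
section Aux
open Real
open scoped ENNReal NNReal

lemma aux_pdf01 (x : ℝ) :
    gaussianPDFReal 0 1 x = (√(2 * π))⁻¹ * rexp (-(2⁻¹) * x ^ 2) := by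
  simp only [gaussianPDFReal, NNReal.coe_one, mul_one, sub_zero]
  ring_nf

lemma aux_exp_integrable : Integrable fun x : ℝ => rexp (-(2⁻¹) * x ^ 2) :=
  integrable_exp_neg_mul_sq (by norm_num)

lemma aux_xexp_integrable : Integrable fun x : ℝ => x * rexp (-(2⁻¹) * x ^ 2) :=
  integrable_mul_exp_neg_mul_sq (by norm_num)

lemma aux_x2exp_integrable : Integrable fun x : ℝ => x ^ 2 * rexp (-(2⁻¹) * x ^ 2) := by
  have := integrable_rpow_mul_exp_neg_mul_sq (b := 2⁻¹) (by norm_num) (s := 2) (by norm_num)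
  simpa [Real.rpow_two] using this

lemma aux_exp_integral : (∫ x : ℝ, rexp (-(2⁻¹) * x ^ 2)) = √(2 * π) := by
  rw [integral_gaussian]
  norm_num [div_eq_mul_inv, mul_comm]

lemma aux_xexp_integral : (∫ x : ℝ, x * rexp (-(2⁻¹) * x ^ 2)) = 0 := by
  have hderiv : ∀ x : ℝ, HasDerivAt (fun y : ℝ => -rexp (-(2⁻¹) * y ^ 2))
      (x * rexp (-(2⁻¹) * x ^ 2)) x := by
    intro x
    have h : HasDerivAt (fun y : ℝ => -(2⁻¹) * y ^ 2) (-(2⁻¹) * (2 * x)) x :=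
      ((hasDerivAt_pow 2 x).const_mul _).congr_deriv (by ring)
    have := (h.exp).neg
    exact this.congr_deriv (by ring)
  exact MeasureTheory.integral_eq_zero_of_hasDerivAt_of_integrable hderiv
    aux_xexp_integrable (aux_exp_integrable.neg)

lemma aux_x2exp_integral : (∫ x : ℝ, x ^ 2 * rexp (-(2⁻¹) * x ^ 2)) = √(2 * π) := by
  have hderiv : ∀ x : ℝ, HasDerivAt (fun y : ℝ => -(y * rexp (-(2⁻¹) * y ^ 2)))
      (x ^ 2 * rexp (-(2⁻¹) * x ^ 2) - rexp (-(2⁻¹) * x ^ 2)) x := by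
    intro x
    have h : HasDerivAt (fun y : ℝ => -(2⁻¹) * y ^ 2) (-(2⁻¹) * (2 * x)) x :=
      ((hasDerivAt_pow 2 x).const_mul _).congr_deriv (by ring)
    have := ((hasDerivAt_id x).mul h.exp).neg
    exact this.congr_deriv (by simp only [id_eq]; ring)
  have hint : Integrable fun x : ℝ => x ^ 2 * rexp (-(2⁻¹) * x ^ 2) - rexp (-(2⁻¹) * x ^ 2) :=
    aux_x2exp_integrable.sub aux_exp_integrable
  have h0 := MeasureTheory.integral_eq_zero_of_hasDerivAt_of_integrable hderiv hint
    (aux_xexp_integrable.neg)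
  rw [integral_sub aux_x2exp_integrable aux_exp_integrable] at h0
  have := aux_exp_integral
  linarith

lemma aux_gauss_integral (g : ℝ → ℝ) :
    (∫ x, g x ∂(gaussianReal 0 1)) = ∫ x, gaussianPDFReal 0 1 x * g x := by
  rw [gaussianReal_of_var_ne_zero 0 one_ne_zero, gaussianPDF_def]
  have h : (fun x => ENNReal.ofReal (gaussianPDFReal 0 1 x))
      = fun x => ((gaussianPDFReal 0 1 x).toNNReal : ℝ≥0∞) := rfl
  rw [h, integral_withDensity_eq_integral_smul ((measurable_gaussianPDFReal 0 1).real_toNNReal) g]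
  congr 1
  ext x
  rw [NNReal.smul_def, smul_eq_mul, Real.coe_toNNReal _ (gaussianPDFReal_nonneg 0 1 x)]

lemma aux_gauss_integrable (g : ℝ → ℝ)
    (h : Integrable (fun x => gaussianPDFReal 0 1 x * g x) volume) :
    Integrable g (gaussianReal 0 1) := by
  rw [gaussianReal_of_var_ne_zero 0 one_ne_zero, gaussianPDF_def]
  have h2 : (fun x => ENNReal.ofReal (gaussianPDFReal 0 1 x))
      = fun x => ((gaussianPDFReal 0 1 x).toNNReal : ℝ≥0∞) := rfl
  rw [h2, integrable_withDensity_iff_integrable_smul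
    ((measurable_gaussianPDFReal 0 1).real_toNNReal)]
  convert h using 2 with x
  · rfl
  rw [NNReal.smul_def, smul_eq_mul, Real.coe_toNNReal _ (gaussianPDFReal_nonneg 0 1 x)]

lemma aux_sqrt2pi_pos : (0 : ℝ) < √(2 * π) := Real.sqrt_pos.2 (by positivity)

lemma aux_gauss_integrable_id : Integrable (fun x : ℝ => x) (gaussianReal 0 1) := by
  refine aux_gauss_integrable _ ?_
  have : (fun x : ℝ => gaussianPDFReal 0 1 x * x)
      = fun x => (√(2 * π))⁻¹ * (x * rexp (-(2⁻¹) * x ^ 2)) := by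
    funext x; rw [aux_pdf01]; ring
  rw [this]
  exact aux_xexp_integrable.const_mul _

lemma aux_gauss_integrable_sq : Integrable (fun x : ℝ => x ^ 2) (gaussianReal 0 1) := by
  refine aux_gauss_integrable _ ?_
  have : (fun x : ℝ => gaussianPDFReal 0 1 x * x ^ 2)
      = fun x => (√(2 * π))⁻¹ * (x ^ 2 * rexp (-(2⁻¹) * x ^ 2)) := by
    funext x; rw [aux_pdf01]; ring
  rw [this]
  exact aux_x2exp_integrable.const_mul _

lemma aux_gauss_integral_id : (∫ x, x ∂(gaussianReal 0 1)) = 0 := by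
  rw [aux_gauss_integral]
  have : (fun x : ℝ => gaussianPDFReal 0 1 x * x)
      = fun x => (√(2 * π))⁻¹ * (x * rexp (-(2⁻¹) * x ^ 2)) := by
    funext x; rw [aux_pdf01]; ring
  rw [this, integral_const_mul, aux_xexp_integral, mul_zero]

lemma aux_gauss_integral_sq : (∫ x, x ^ 2 ∂(gaussianReal 0 1)) = 1 := by
  rw [aux_gauss_integral]
  have : (fun x : ℝ => gaussianPDFReal 0 1 x * x ^ 2)
      = fun x => (√(2 * π))⁻¹ * (x ^ 2 * rexp (-(2⁻¹) * x ^ 2)) := by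
    funext x; rw [aux_pdf01]; ring
  rw [this, integral_const_mul, aux_x2exp_integral, inv_mul_cancel₀ aux_sqrt2pi_pos.ne']

end Aux


/-- Block-wise sparse zeroth-order estimation: with blocks given by `b : Fin d → Fin G`,
block masks `m_i^blk ~ Bernoulli(π_i^blk)`, Gaussian `z`, `v_j = m_{b j}^blk z_j` and
`Δ = ⟨g, v⟩`, the block estimator `g̃_{G_i} = (Δ/π_i^blk) m_i^blk z_{G_i}` is unbiased:
each coordinate `j` of block `i` has expectation `g_j` whenever `π_i^blk > 0`. -/
theorem stmt16 {Ω : Type*} [MeasureSpace Ω] [IsProbabilityMeasure (ℙ : Measure Ω)]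
    {d G : ℕ} (b : Fin d → Fin G)
    (πblk : Fin G → ℝ) (hπ : ∀ i, πblk i ∈ Set.Icc (0 : ℝ) 1)
    (mblk : Fin G → Ω → ℝ) (z : Fin d → Ω → ℝ)
    (hm01 : ∀ i a, mblk i a = 0 ∨ mblk i a = 1)
    (hmmeas : ∀ i, Measurable (mblk i)) (hzmeas : ∀ j, Measurable (z j))
    (hmπ : ∀ i, (ℙ {a | mblk i a = 1}).toReal = πblk i)
    (hz : ∀ j, Measure.map (z j) ℙ = gaussianReal 0 1)
    (hindep : iIndepFun (β := fun _ : Fin G ⊕ Fin d => ℝ)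
      (Sum.elim mblk z) ℙ)
    (g : Fin d → ℝ) :
    ∀ i : Fin G, 0 < πblk i → ∀ j : Fin d, b j = i →
      𝔼[fun a =>
          (∑ k, g k * (mblk (b k) a * z k a)) / πblk i * mblk i a * z j a] = g j := by
  intro i hπ0 j hbj
  -- measurability of the joint family
  have hF : ∀ u : Fin G ⊕ Fin d, Measurable (Sum.elim mblk z u) := by
    rintro (u | u)
    · exact hmmeas u
    · exact hzmeas u
  -- basic integrability and moments for z
  have Izk : ∀ k, Integrable (z k) ℙ := by
    intro k
    have h1 : Integrable (fun x : ℝ => x) (Measure.map (z k) ℙ) := by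
      rw [hz k]; exact aux_gauss_integrable_id
    exact (integrable_map_measure h1.aestronglyMeasurable (hzmeas k).aemeasurable).1 h1
  have Ezk : ∀ k, (∫ a, z k a ∂ℙ) = 0 := by
    intro k
    have h1 : AEStronglyMeasurable (fun x : ℝ => x) (Measure.map (z k) ℙ) :=
      aestronglyMeasurable_id
    have := integral_map (hzmeas k).aemeasurable h1
    rw [hz k, aux_gauss_integral_id] at this
    exact this.symm
  have Iz2 : ∀ k, Integrable (fun a => z k a ^ 2) ℙ := by
    intro k
    have h1 : Integrable (fun x : ℝ => x ^ 2) (Measure.map (z k) ℙ) := by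
      rw [hz k]; exact aux_gauss_integrable_sq
    exact (integrable_map_measure h1.aestronglyMeasurable (hzmeas k).aemeasurable).1 h1
  have Ez2 : ∀ k, (∫ a, z k a ^ 2 ∂ℙ) = 1 := by
    intro k
    have h1 : AEStronglyMeasurable (fun x : ℝ => x ^ 2) (Measure.map (z k) ℙ) :=
      (measurable_id.pow_const 2).aestronglyMeasurable
    have := integral_map (hzmeas k).aemeasurable h1
    rw [hz k, aux_gauss_integral_sq] at this
    exact this.symm
  -- product of two coordinates of z is integrable
  have Izz : ∀ k l, Integrable (fun a => z k a * z l a) ℙ := by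
    intro k l
    refine Integrable.mono' (((Iz2 k).add (Iz2 l)).div_const 2)
      ((hzmeas k).mul (hzmeas l)).aestronglyMeasurable (ae_of_all _ fun a => ?_)
    rw [Real.norm_eq_abs, abs_mul]
    simp only [Pi.add_apply]
    nlinarith [sq_nonneg (|z k a| - |z l a|), sq_abs (z k a), sq_abs (z l a),
      abs_nonneg (z k a), abs_nonneg (z l a)]
  -- mask facts
  have hmbd : ∀ i' a, ‖mblk i' a‖ ≤ 1 := by
    intro i' a
    rcases hm01 i' a with h | h <;> simp [h]
  have Im : ∀ i', Integrable (mblk i') ℙ := by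
    intro i'
    exact (integrable_const (1 : ℝ)).mono' (hmmeas i').aestronglyMeasurable
      (ae_of_all _ fun a => by simpa using hmbd i' a)
  have Emi : ∀ i', (∫ a, mblk i' a ∂ℙ) = πblk i' := by
    intro i'
    have hS : MeasurableSet {a | mblk i' a = 1} := hmmeas i' (measurableSet_singleton 1)
    have hind : mblk i' = Set.indicator {a | mblk i' a = 1} (fun _ => (1 : ℝ)) := by
      funext a
      rcases hm01 i' a with h | h
      · rw [Set.indicator_apply, if_neg (by simp [Set.mem_setOf_eq, h]), h]
      · rw [Set.indicator_apply, if_pos (by simpa [Set.mem_setOf_eq] using h), h]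
    calc (∫ a, mblk i' a ∂ℙ)
        = ∫ a, Set.indicator {a | mblk i' a = 1} (fun _ => (1 : ℝ)) a ∂ℙ := by rw [← hind]
      _ = πblk i' := by
          rw [integral_indicator_const _ hS, smul_eq_mul, mul_one, measureReal_def, hmπ i']
  -- integrability of the products appearing in each term
  have Imz : ∀ i' k, Integrable (fun a => mblk i' a * z k a) ℙ := by
    intro i' k
    exact (Izk k).bdd_mul (c := 1) (hmmeas i').aestronglyMeasurable (ae_of_all _ fun a => hmbd i' a)
  have Iterm : ∀ k, Integrable (fun a => mblk (b k) a * z k a * (mblk i a * z j a)) ℙ := by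
    intro k
    have h1 : Integrable (fun a => mblk (b k) a * mblk i a * (z k a * z j a)) ℙ := by
      refine (Izz k j).bdd_mul (c := 1) ((hmmeas (b k)).mul (hmmeas i)).aestronglyMeasurable
        (ae_of_all _ fun a => ?_)
      rw [norm_mul]
      exact mul_le_one₀ (hmbd _ a) (norm_nonneg _) (hmbd _ a)
    exact h1.congr (ae_of_all _ fun a => by ring)
  -- value of each term
  have key : ∀ k, (∫ a, mblk (b k) a * z k a * (mblk i a * z j a) ∂ℙ)
      = if k = j then πblk i else 0 := by
    intro k
    by_cases hk : k = j
    · subst hk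
      rw [if_pos rfl, hbj]
      have hpt : (fun a => mblk i a * z k a * (mblk i a * z k a))
          = fun a => mblk i a * z k a ^ 2 := by
        funext a
        rcases hm01 i a with h | h <;> simp [h] <;> ring
      have hind : IndepFun (mblk i) (fun a => z k a ^ 2) ℙ := by
        have h := hindep.indepFun (show (Sum.inl i : Fin G ⊕ Fin d) ≠ Sum.inr k by simp)
        exact h.comp measurable_id (measurable_id.pow_const 2)
      calc (∫ a, mblk i a * z k a * (mblk i a * z k a) ∂ℙ)
          = ∫ a, (mblk i * fun a => z k a ^ 2) a ∂ℙ := by rw [hpt]; rfl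
        _ = (∫ a, mblk i a ∂ℙ) * ∫ a, z k a ^ 2 ∂ℙ :=
            hind.integral_mul_eq_mul_integral (Im i).aestronglyMeasurable (Iz2 k).aestronglyMeasurable
        _ = πblk i := by rw [Emi i, Ez2 k, mul_one]
    · rw [if_neg hk]
      by_cases hbk : b k = i
      · rw [hbk]
        have hpt : (fun a => mblk i a * z k a * (mblk i a * z j a))
            = fun a => mblk i a * (z k a * z j a) := by
          funext a
          rcases hm01 i a with h | h <;> simp [h] <;> ring
        have hind : IndepFun (mblk i) (fun a => z k a * z j a) ℙ := by
          have h := hindep.indepFun_mul_right hF (Sum.inl i) (Sum.inr k) (Sum.inr j)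
            (by simp) (by simp)
          exact h
        have hzz : (∫ a, z k a * z j a ∂ℙ) = 0 := by
          have h := hindep.indepFun (show (Sum.inr k : Fin G ⊕ Fin d) ≠ Sum.inr j by simp [hk])
          have := h.integral_mul_eq_mul_integral (Izk k).aestronglyMeasurable (Izk j).aestronglyMeasurable
          calc (∫ a, z k a * z j a ∂ℙ) = ∫ a, (z k * z j) a ∂ℙ := rfl
            _ = (∫ a, z k a ∂ℙ) * ∫ a, z j a ∂ℙ := this
            _ = 0 := by rw [Ezk k, Ezk j, mul_zero]
        calc (∫ a, mblk i a * z k a * (mblk i a * z j a) ∂ℙ)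
            = ∫ a, (mblk i * fun a => z k a * z j a) a ∂ℙ := by rw [hpt]; rfl
          _ = (∫ a, mblk i a ∂ℙ) * ∫ a, z k a * z j a ∂ℙ :=
              hind.integral_mul_eq_mul_integral (Im i).aestronglyMeasurable (Izz k j).aestronglyMeasurable
          _ = 0 := by rw [hzz, mul_zero]
      · have hind : IndepFun (fun a => mblk (b k) a * z k a) (fun a => mblk i a * z j a) ℙ :=
          hindep.indepFun_mul_mul hF (Sum.inl (b k)) (Sum.inr k) (Sum.inl i) (Sum.inr j)
            (by simp [hbk]) (by simp) (by simp) (by simp [hk])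
        have hmz : (∫ a, mblk i a * z j a ∂ℙ) = 0 := by
          have h := hindep.indepFun (show (Sum.inl i : Fin G ⊕ Fin d) ≠ Sum.inr j by simp)
          have := h.integral_mul_eq_mul_integral (Im i).aestronglyMeasurable (Izk j).aestronglyMeasurable
          calc (∫ a, mblk i a * z j a ∂ℙ) = ∫ a, (mblk i * z j) a ∂ℙ := rfl
            _ = (∫ a, mblk i a ∂ℙ) * ∫ a, z j a ∂ℙ := this
            _ = 0 := by rw [Ezk j, mul_zero]
        calc (∫ a, mblk (b k) a * z k a * (mblk i a * z j a) ∂ℙ)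
            = ∫ a, ((fun a => mblk (b k) a * z k a) * fun a => mblk i a * z j a) a ∂ℙ := rfl
          _ = (∫ a, mblk (b k) a * z k a ∂ℙ) * ∫ a, mblk i a * z j a ∂ℙ :=
              hind.integral_mul_eq_mul_integral (Imz (b k) k).aestronglyMeasurable (Imz i j).aestronglyMeasurable
          _ = 0 := by rw [hmz, mul_zero]
  -- assemble
  have hrw : (fun a => (∑ k, g k * (mblk (b k) a * z k a)) / πblk i * mblk i a * z j a)
      = fun a => ∑ k, g k / πblk i * (mblk (b k) a * z k a * (mblk i a * z j a)) := by
    funext a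
    rw [div_mul_eq_mul_div, div_mul_eq_mul_div, Finset.sum_mul, Finset.sum_mul,
      Finset.sum_div]
    exact Finset.sum_congr rfl fun k _ => by ring
  rw [hrw, integral_finset_sum _ fun k _ => (Iterm k).const_mul _]
  simp_rw [integral_const_mul, key]
  rw [Finset.sum_eq_single j]
  · rw [if_pos rfl, div_mul_cancel₀ _ hπ0.ne']
  · intro k _ hkj
    rw [if_neg hkj, mul_zero]
  · intro h
    exact absurd (Finset.mem_univ j) h
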